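/- Fix τ ∈ (0,1) and integers p ≥ 0 and r with |r| ≤ p and r ≡ p (mod 2). Then there exists a constant C > 0 such that for all integers k ≥ max(r,1): |A_τ(p, k−r, k) − τ^{(p+r)/2}·binom(p, (p+r)/2)·k^{(p+r)/2}| ≤ C·k^{(p+r)/2 − 1}. -/

import Mathlib

open Finset

/-- `1/n!` for an integer `n`, with the convention that `1/n! = 0` for negative `n`. -/
noncomputable def invfac (n : ℤ) : ℝ := if 0 ≤ n then ((n.toNat).factorial : ℝ)⁻¹ else 0

/-- Binomial coefficient `binom(n, m)` for `n : ℕ`, `m : ℤ`, zero for `m < 0` or `m > n`. -/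
noncomputable def zbinom (n : ℕ) (m : ℤ) : ℝ :=
  if 0 ≤ m ∧ m ≤ (n : ℤ) then (n.choose m.toNat : ℝ) else 0

/-- The Hermite expansion coefficients `A_τ(p, j, k)`. -/
noncomputable def Aher (τ : ℝ) (p : ℕ) (j : ℤ) (k : ℕ) : ℝ :=
  if 0 ≤ j ∧ |j - (k : ℤ)| ≤ (p : ℤ) ∧ (j - (k : ℤ)) % 2 = (p : ℤ) % 2 then
    τ ^ ((((p : ℤ) + k - j) / 2).toNat) *
      ∑ l ∈ Finset.range (p / 2 + 1),
        (p.factorial : ℝ) * ((2 : ℝ) ^ l * (l.factorial : ℝ))⁻¹ *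
          invfac (((p : ℤ) - k + j) / 2 - l) *
          zbinom k (((p : ℤ) + k - j) / 2 - l)
  else 0

lemma desc_bound (m : ℕ) (hm : 1 ≤ m) :
    ∃ B : ℝ, 0 < B ∧ ∀ k : ℕ, 1 ≤ k →
      |((k.descFactorial m : ℝ)) - (k : ℝ) ^ m| ≤ B * (k : ℝ) ^ (m - 1) := by
  induction m, hm using Nat.le_induction with
  | base =>
    refine ⟨1, one_pos, fun k hk => ?_⟩
    simp [Nat.descFactorial_one]
  | succ m hm ih =>
    obtain ⟨B, hB, hBk⟩ := ih
    refine ⟨B + 2 * m + 2, by positivity, fun k hk => ?_⟩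
    have hk1 : (1 : ℝ) ≤ (k : ℝ) := by exact_mod_cast hk
    have hkpos : (0 : ℝ) < (k : ℝ) := by linarith
    have hpowpos : (0 : ℝ) < (k : ℝ) ^ m := by positivity
    have hpow : (k : ℝ) * (k : ℝ) ^ (m - 1) = (k : ℝ) ^ m := by
      rw [← pow_succ']; congr 1; omega
    rw [Nat.descFactorial_succ]
    rcases le_or_gt k m with hkm | hkm
    · have h0 : k - m = 0 := Nat.sub_eq_zero_of_le hkm
      rw [h0]
      have hkmr : (k : ℝ) ≤ (m : ℝ) := by exact_mod_cast hkm
      have : (k : ℝ) ^ (m + 1) = (k : ℝ) * (k : ℝ) ^ m := by ring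
      simp only [Nat.zero_mul, Nat.cast_zero, zero_sub, abs_neg,
        abs_of_nonneg (le_of_lt (by positivity : (0:ℝ) < (k:ℝ) ^ (m+1)))]
      have h1 : (k : ℝ) ^ (m + 1) ≤ (m : ℝ) * (k : ℝ) ^ m := by
        rw [this]; exact mul_le_mul_of_nonneg_right hkmr (le_of_lt hpowpos)
      have h2 : (m + 1) - 1 = m := by omega
      rw [h2]
      nlinarith [hpowpos, hB]
    · have hmk : m ≤ k := hkm.le
      have hD := hBk k hk
      have expand : (((k - m) * k.descFactorial m : ℕ) : ℝ) - (k : ℝ) ^ (m + 1)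
          = ((k : ℝ) - m) * ((k.descFactorial m : ℝ) - (k : ℝ) ^ m) - m * (k : ℝ) ^ m := by
        push_cast [Nat.cast_sub hmk]
        ring
      rw [expand]
      have h2 : (m + 1) - 1 = m := by omega
      rw [h2]
      have hkmr : (0 : ℝ) ≤ (k : ℝ) - m := by
        have : (m : ℝ) ≤ (k : ℝ) := by exact_mod_cast hmk
        linarith
      calc |((k : ℝ) - m) * ((k.descFactorial m : ℝ) - (k : ℝ) ^ m) - m * (k : ℝ) ^ m|
          ≤ |((k : ℝ) - m) * ((k.descFactorial m : ℝ) - (k : ℝ) ^ m)| + |(m : ℝ) * (k : ℝ) ^ m| :=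
            abs_sub _ _
        _ = ((k : ℝ) - m) * |(k.descFactorial m : ℝ) - (k : ℝ) ^ m| + (m : ℝ) * (k : ℝ) ^ m := by
            rw [abs_mul, abs_mul, abs_of_nonneg hkmr, abs_of_nonneg (by positivity : (0:ℝ) ≤ (m:ℝ)),
              abs_of_pos hpowpos]
        _ ≤ (k : ℝ) * (B * (k : ℝ) ^ (m - 1)) + (m : ℝ) * (k : ℝ) ^ m := by
            have h1 : ((k:ℝ) - m) * |(k.descFactorial m : ℝ) - (k : ℝ) ^ m| ≤ (k : ℝ) * (B * (k : ℝ) ^ (m - 1)) :=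
              mul_le_mul (by linarith) (hD) (abs_nonneg _) (by linarith)
            linarith
        _ = (B + m) * (k : ℝ) ^ m := by
            rw [show (k:ℝ) * (B * (k:ℝ)^(m-1)) = B * ((k:ℝ) * (k:ℝ)^(m-1)) by ring, hpow]; ring
        _ ≤ (B + 2 * m + 2) * (k : ℝ) ^ m := by nlinarith

lemma choose_bound (m : ℕ) (hm : 1 ≤ m) :
    ∃ B : ℝ, 0 < B ∧ ∀ k : ℕ, 1 ≤ k →
      |((k.choose m : ℝ)) - (k : ℝ) ^ m / (m.factorial : ℝ)| ≤ B * (k : ℝ) ^ (m - 1) := by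
  obtain ⟨B, hB, hBk⟩ := desc_bound m hm
  refine ⟨B, hB, fun k hk => ?_⟩
  have hfac : (0 : ℝ) < (m.factorial : ℝ) := by exact_mod_cast m.factorial_pos
  have hfac1 : (1 : ℝ) ≤ (m.factorial : ℝ) := by exact_mod_cast m.factorial_pos
  have hid : ((k.choose m : ℝ)) - (k : ℝ) ^ m / (m.factorial : ℝ)
      = ((k.descFactorial m : ℝ) - (k : ℝ) ^ m) / (m.factorial : ℝ) := by
    rw [Nat.descFactorial_eq_factorial_mul_choose]
    push_cast
    field_simp
  rw [hid, abs_div, abs_of_pos hfac]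
  calc |(k.descFactorial m : ℝ) - (k : ℝ) ^ m| / (m.factorial : ℝ)
      ≤ |(k.descFactorial m : ℝ) - (k : ℝ) ^ m| := div_le_self (abs_nonneg _) hfac1
    _ ≤ B * (k : ℝ) ^ (m - 1) := hBk k hk

lemma invfac_nonneg (n : ℤ) : 0 ≤ invfac n := by
  unfold invfac; split <;> positivity

lemma invfac_le_one (n : ℤ) : invfac n ≤ 1 := by
  unfold invfac; split
  · rw [inv_le_one_iff₀]; right; exact_mod_cast Nat.one_le_iff_ne_zero.2 (Nat.factorial_ne_zero _)
  · norm_num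

lemma invfac_natCast (n : ℕ) : invfac (n : ℤ) = ((n.factorial : ℝ))⁻¹ := by
  unfold invfac
  rw [if_pos (Int.natCast_nonneg n), Int.toNat_natCast]

lemma zbinom_nonneg (n : ℕ) (m : ℤ) : 0 ≤ zbinom n m := by
  unfold zbinom; split <;> positivity

lemma zbinom_natCast (k n : ℕ) : zbinom k (n : ℤ) = (k.choose n : ℝ) := by
  unfold zbinom
  rcases le_or_gt n k with h | h
  · rw [if_pos ⟨Int.natCast_nonneg n, by exact_mod_cast h⟩, Int.toNat_natCast]
  · rw [if_neg, Nat.choose_eq_zero_of_lt h, Nat.cast_zero]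
    rintro ⟨-, h2⟩
    exact absurd (by exact_mod_cast h2) (Nat.not_le.2 h)

lemma zbinom_neg (n : ℕ) (m : ℤ) (h : m < 0) : zbinom n m = 0 := by
  unfold zbinom; rw [if_neg]; rintro ⟨h1, -⟩; omega

lemma zbinom_le (k m l : ℕ) (hk : 1 ≤ k) (hl : 1 ≤ l) :
    zbinom k ((m : ℤ) - l) ≤ (k : ℝ) ^ (m - 1) := by
  have hk1 : (1 : ℝ) ≤ (k : ℝ) := by exact_mod_cast hk
  rcases le_or_gt l m with h | h
  · have e : (m : ℤ) - l = ((m - l : ℕ) : ℤ) := by omega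
    rw [e, zbinom_natCast]
    calc ((k.choose (m - l) : ℝ)) ≤ (k : ℝ) ^ (m - l) := by
          exact_mod_cast Nat.choose_le_pow k (m - l)
      _ ≤ (k : ℝ) ^ (m - 1) := pow_le_pow_right₀ hk1 (by omega)
  · rw [zbinom_neg _ _ (by omega)]
    positivity

lemma sum_est (p m q : ℕ) (hm : 1 ≤ m) (hmq : m + q = p) (B : ℝ) (hB : 0 < B)
    (k : ℕ) (hk : 1 ≤ k)
    (hBk : |((k.choose m : ℝ)) - (k : ℝ) ^ m / (m.factorial : ℝ)| ≤ B * (k : ℝ) ^ (m - 1)) :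
    |(∑ l ∈ Finset.range (p / 2 + 1),
        (p.factorial : ℝ) * ((2 : ℝ) ^ l * (l.factorial : ℝ))⁻¹ *
          invfac ((q : ℤ) - l) * zbinom k ((m : ℤ) - l)) -
        (p.choose m : ℝ) * (k : ℝ) ^ m|
      ≤ ((p.factorial : ℝ) * B + ((p / 2 + 1 : ℕ) : ℝ) * (p.factorial : ℝ)) * (k : ℝ) ^ (m - 1) := by
  set f : ℕ → ℝ := fun l => (p.factorial : ℝ) * ((2 : ℝ) ^ l * (l.factorial : ℝ))⁻¹ *
      invfac ((q : ℤ) - l) * zbinom k ((m : ℤ) - l) with hf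
  have hk1 : (1 : ℝ) ≤ (k : ℝ) := by exact_mod_cast hk
  have hkp : (0 : ℝ) < (k : ℝ) := by linarith
  have hpf : (0 : ℝ) < (p.factorial : ℝ) := by exact_mod_cast p.factorial_pos
  have hqf : (1 : ℝ) ≤ (q.factorial : ℝ) := by exact_mod_cast q.factorial_pos
  have hmf : ((m.factorial : ℝ)) ≠ 0 := by positivity
  have hmem : (0 : ℕ) ∈ Finset.range (p / 2 + 1) := Finset.mem_range.2 (Nat.succ_pos _)
  have hmp : m ≤ p := by omega
  have hcid : (p.choose m : ℝ) * (m.factorial : ℝ) * (q.factorial : ℝ) = (p.factorial : ℝ) := by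
    have h := Nat.choose_mul_factorial_mul_factorial hmp
    rw [show p - m = q by omega] at h
    exact_mod_cast h
  have hf0 : f 0 = (p.factorial : ℝ) * (q.factorial : ℝ)⁻¹ * (k.choose m : ℝ) := by
    simp only [hf, Nat.cast_zero, sub_zero, pow_zero, Nat.factorial_zero, Nat.cast_one,
      one_mul, inv_one, mul_one]
    rw [invfac_natCast, zbinom_natCast]
  have hsplit0 : f 0 - (p.choose m : ℝ) * (k : ℝ) ^ m
      = (p.factorial : ℝ) * (q.factorial : ℝ)⁻¹ *
        ((k.choose m : ℝ) - (k : ℝ) ^ m / (m.factorial : ℝ)) := by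
    rw [hf0, ← hcid]
    have hq0 : ((q.factorial : ℝ)) ≠ 0 := by positivity
    field_simp
  have h1 : |f 0 - (p.choose m : ℝ) * (k : ℝ) ^ m|
      ≤ (p.factorial : ℝ) * B * (k : ℝ) ^ (m - 1) := by
    rw [hsplit0, abs_mul, abs_of_nonneg (by positivity : (0:ℝ) ≤ (p.factorial : ℝ) * (q.factorial : ℝ)⁻¹)]
    have hle : (p.factorial : ℝ) * (q.factorial : ℝ)⁻¹ ≤ (p.factorial : ℝ) := by
      nlinarith [inv_le_one_of_one_le₀ hqf, inv_nonneg.2 (le_trans zero_le_one hqf)]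
    calc (p.factorial : ℝ) * (q.factorial : ℝ)⁻¹ * |(k.choose m : ℝ) - (k : ℝ) ^ m / (m.factorial : ℝ)|
        ≤ (p.factorial : ℝ) * (B * (k : ℝ) ^ (m - 1)) :=
          mul_le_mul hle hBk (abs_nonneg _) (le_of_lt hpf)
      _ = (p.factorial : ℝ) * B * (k : ℝ) ^ (m - 1) := by ring
  have hterm : ∀ l ∈ (Finset.range (p / 2 + 1)).erase 0,
      |f l| ≤ (p.factorial : ℝ) * (k : ℝ) ^ (m - 1) := by
    intro l hl
    have hl1 : 1 ≤ l := Nat.one_le_iff_ne_zero.2 (Finset.ne_of_mem_erase hl)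
    have hznn := zbinom_nonneg k ((m : ℤ) - l)
    have hzle := zbinom_le k m l hk hl1
    have hifnn := invfac_nonneg ((q : ℤ) - l)
    have hifle := invfac_le_one ((q : ℤ) - l)
    have hinvnn : (0 : ℝ) ≤ ((2 : ℝ) ^ l * (l.factorial : ℝ))⁻¹ := by positivity
    have hinv1 : ((2 : ℝ) ^ l * (l.factorial : ℝ))⁻¹ ≤ 1 := by
      rw [inv_le_one_iff₀]; right
      have h2 : (1 : ℝ) ≤ (2 : ℝ) ^ l := one_le_pow₀ (by norm_num)
      have h3 : (1 : ℝ) ≤ (l.factorial : ℝ) := by exact_mod_cast l.factorial_pos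
      nlinarith
    have hfnn : 0 ≤ f l := by
      simp only [hf]
      exact mul_nonneg (mul_nonneg (mul_nonneg (le_of_lt hpf) hinvnn) hifnn) hznn
    rw [abs_of_nonneg hfnn]
    simp only [hf]
    calc (p.factorial : ℝ) * ((2 : ℝ) ^ l * (l.factorial : ℝ))⁻¹ *
          invfac ((q : ℤ) - l) * zbinom k ((m : ℤ) - l)
        ≤ (p.factorial : ℝ) * 1 * 1 * ((k : ℝ) ^ (m - 1)) := by
          gcongr
      _ = (p.factorial : ℝ) * (k : ℝ) ^ (m - 1) := by ring
  have hsum : ∑ l ∈ (Finset.range (p / 2 + 1)).erase 0, |f l|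
      ≤ ((p / 2 + 1 : ℕ) : ℝ) * ((p.factorial : ℝ) * (k : ℝ) ^ (m - 1)) := by
    calc ∑ l ∈ (Finset.range (p / 2 + 1)).erase 0, |f l|
        ≤ ∑ _l ∈ (Finset.range (p / 2 + 1)).erase 0, (p.factorial : ℝ) * (k : ℝ) ^ (m - 1) :=
          Finset.sum_le_sum hterm
      _ = (((Finset.range (p / 2 + 1)).erase 0).card : ℝ) * ((p.factorial : ℝ) * (k : ℝ) ^ (m - 1)) := by
          rw [Finset.sum_const, nsmul_eq_mul]
      _ ≤ ((p / 2 + 1 : ℕ) : ℝ) * ((p.factorial : ℝ) * (k : ℝ) ^ (m - 1)) := by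
          have hc : (((Finset.range (p / 2 + 1)).erase 0).card : ℝ) ≤ ((p / 2 + 1 : ℕ) : ℝ) := by
            exact_mod_cast le_trans (Finset.card_erase_le) (le_of_eq (Finset.card_range _))
          exact mul_le_mul_of_nonneg_right hc (by positivity)
  calc |(∑ l ∈ Finset.range (p / 2 + 1), f l) - (p.choose m : ℝ) * (k : ℝ) ^ m|
      = |(f 0 - (p.choose m : ℝ) * (k : ℝ) ^ m) + ∑ l ∈ (Finset.range (p / 2 + 1)).erase 0, f l| := by
        rw [← Finset.add_sum_erase _ f hmem, add_sub_right_comm]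
    _ ≤ |f 0 - (p.choose m : ℝ) * (k : ℝ) ^ m| + |∑ l ∈ (Finset.range (p / 2 + 1)).erase 0, f l| :=
        abs_add_le _ _
    _ ≤ |f 0 - (p.choose m : ℝ) * (k : ℝ) ^ m| + ∑ l ∈ (Finset.range (p / 2 + 1)).erase 0, |f l| := by
        gcongr
        exact Finset.abs_sum_le_sum_abs _ _
    _ ≤ (p.factorial : ℝ) * B * (k : ℝ) ^ (m - 1)
        + ((p / 2 + 1 : ℕ) : ℝ) * ((p.factorial : ℝ) * (k : ℝ) ^ (m - 1)) := add_le_add h1 hsum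
    _ = ((p.factorial : ℝ) * B + ((p / 2 + 1 : ℕ) : ℝ) * (p.factorial : ℝ)) * (k : ℝ) ^ (m - 1) := by
        ring

/-- Asymptotics of the Hermite expansion coefficients: for fixed `τ ∈ (0,1)`,
`p ≥ 0` and `|r| ≤ p` with `r ≡ p (mod 2)`, there is `C > 0` such that for all `k ≥ max(r,1)`,
`|A_τ(p, k−r, k) − τ^{(p+r)/2} binom(p, (p+r)/2) k^{(p+r)/2}| ≤ C k^{(p+r)/2 − 1}`. -/
theorem Aher_asymptotics (τ : ℝ) (hτ0 : 0 < τ) (hτ1 : τ < 1)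
    (p : ℕ) (r : ℤ) (hr : |r| ≤ (p : ℤ)) (hpar : r % 2 = (p : ℤ) % 2) :
    ∃ C > 0, ∀ k : ℕ, max r 1 ≤ (k : ℤ) →
      |Aher τ p ((k : ℤ) - r) k -
          τ ^ ((((p : ℤ) + r) / 2).toNat) * zbinom p (((p : ℤ) + r) / 2) *
            (k : ℝ) ^ (((p : ℤ) + r) / 2)|
        ≤ C * (k : ℝ) ^ ((((p : ℤ) + r) / 2) - 1) := by
  have hr' := abs_le.mp hr
  set m : ℕ := (((p : ℤ) + r) / 2).toNat with hmdef
  have h2m : (p : ℤ) + r = 2 * m := by omega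
  set q : ℕ := p - m with hqdef
  have h2q : (p : ℤ) - r = 2 * q := by omega
  have he : ((p : ℤ) + r) / 2 = (m : ℤ) := by omega
  have hA : ∀ k : ℕ, max r 1 ≤ (k : ℤ) →
      Aher τ p ((k : ℤ) - r) k = τ ^ m * ∑ l ∈ Finset.range (p / 2 + 1),
        (p.factorial : ℝ) * ((2 : ℝ) ^ l * (l.factorial : ℝ))⁻¹ *
          invfac ((q : ℤ) - l) * zbinom k ((m : ℤ) - l) := by
    intro k hk
    have hkr : r ≤ (k : ℤ) := le_trans (le_max_left r 1) hk
    unfold Aher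
    have hcond : 0 ≤ (k : ℤ) - r ∧ |(k : ℤ) - r - k| ≤ (p : ℤ) ∧
        ((k : ℤ) - r - k) % 2 = (p : ℤ) % 2 := by
      refine ⟨by omega, ?_, by omega⟩
      rw [show (k : ℤ) - r - k = -r by ring, abs_neg]
      exact hr
    rw [if_pos hcond]
    have e1 : (((p : ℤ) + k - ((k : ℤ) - r)) / 2).toNat = m := by omega
    rw [e1]
    congr 1
    refine Finset.sum_congr rfl fun l _ => ?_
    have e2 : ((p : ℤ) - k + ((k : ℤ) - r)) / 2 - l = (q : ℤ) - l := by omega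
    have e3 : ((p : ℤ) + k - ((k : ℤ) - r)) / 2 - l = (m : ℤ) - l := by omega
    rw [e2, e3]
  rcases Nat.eq_zero_or_pos m with hm0 | hm1
  · -- m = 0
    refine ⟨1, one_pos, fun k hk => ?_⟩
    have hk1 : 1 ≤ k := by
      have : (1 : ℤ) ≤ (k : ℤ) := le_trans (le_max_right r 1) hk
      exact_mod_cast this
    have hS : (∑ l ∈ Finset.range (p / 2 + 1),
        (p.factorial : ℝ) * ((2 : ℝ) ^ l * (l.factorial : ℝ))⁻¹ *
          invfac ((q : ℤ) - l) * zbinom k ((m : ℤ) - l)) = 1 := by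
      rw [Finset.sum_eq_single_of_mem (0 : ℕ) (Finset.mem_range.2 (Nat.succ_pos _))
        (fun l _ hl0 => by rw [zbinom_neg k _ (by omega), mul_zero])]
      have e1 : (q : ℤ) - ((0 : ℕ) : ℤ) = ((p : ℕ) : ℤ) := by omega
      have e2 : (m : ℤ) - ((0 : ℕ) : ℤ) = ((0 : ℕ) : ℤ) := by omega
      rw [e1, e2, invfac_natCast, zbinom_natCast]
      have hpf : ((p.factorial : ℝ)) ≠ 0 := by positivity
      field_simp
      simp
    rw [hA k hk, hS, he, zbinom_natCast, hm0]
    have hkp : (0 : ℝ) < (k : ℝ) := by exact_mod_cast hk1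
    have hlhs : |τ ^ 0 * 1 - τ ^ 0 * ((p.choose 0 : ℕ) : ℝ) * (k : ℝ) ^ ((0 : ℕ) : ℤ)| = 0 := by
      simp
    rw [hlhs]
    positivity
  · -- 1 ≤ m
    obtain ⟨B, hB, hBk⟩ := choose_bound m hm1
    have hpf : (0 : ℝ) < (p.factorial : ℝ) := by exact_mod_cast p.factorial_pos
    have hD : (0 : ℝ) < (p.factorial : ℝ) * B + ((p / 2 + 1 : ℕ) : ℝ) * (p.factorial : ℝ) := by
      have : (0 : ℝ) < ((p / 2 + 1 : ℕ) : ℝ) := by exact_mod_cast Nat.succ_pos (p / 2)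
      nlinarith
    have hτm : (0 : ℝ) < τ ^ m := by positivity
    refine ⟨τ ^ m * ((p.factorial : ℝ) * B + ((p / 2 + 1 : ℕ) : ℝ) * (p.factorial : ℝ)),
      mul_pos hτm hD, fun k hk => ?_⟩
    have hk1 : 1 ≤ k := by
      have : (1 : ℤ) ≤ (k : ℤ) := le_trans (le_max_right r 1) hk
      exact_mod_cast this
    have hexp : ((p : ℤ) + r) / 2 - 1 = ((m - 1 : ℕ) : ℤ) := by omega
    rw [hA k hk, hexp, he, zbinom_natCast, zpow_natCast, zpow_natCast]
    have key := sum_est p m q hm1 (by omega) B hB k hk1 (hBk k hk1)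
    rw [mul_assoc, ← mul_sub, abs_mul, abs_of_pos hτm, mul_assoc]
    exact mul_le_mul_of_nonneg_left key hτm.le
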